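/- Let (a_n)_{n≥1} be a strictly decreasing sequence of positive reals with a_n → 0 and lim_{n→∞} a_{n+1}/a_n = 1. Then there exists a compact set E ⊆ ℝ of positive Lebesgue measure such that (a_n)_{n≥1} cannot be bi-Lipschitz embedded into E, i.e., there is no bi-Lipschitz map f : ℝ → ℝ with f(a_n) ∈ E for all n. -/

import Mathlib

open MeasureTheory Filter
open scoped ENNReal

private lemma cross_lemma (b : ℕ → ℝ) (p c d : ℝ) (N : ℕ)
    (hb : ∀ n ≥ N, b n ∉ Set.Ioo c d)
    (htend : Tendsto b atTop (nhds p))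
    (hN : d < b N) (hp : p < c) :
    ∃ m ≥ N, d - c ≤ |b m - b (m + 1)| := by
  classical
  have hev : ∀ᶠ n in atTop, b n < c := htend.eventually (eventually_lt_nhds hp)
  obtain ⟨N₂, hN₂⟩ := eventually_atTop.mp hev
  have hex : ∃ n, N ≤ n ∧ b (n + 1) ≤ c :=
    ⟨max N N₂, le_max_left _ _,
      (hN₂ _ (le_trans (le_max_right _ _) (Nat.le_succ _))).le⟩
  obtain ⟨hmN, hmc⟩ := Nat.find_spec hex
  refine ⟨Nat.find hex, hmN, ?_⟩
  have hbm : d ≤ b (Nat.find hex) := by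
    rcases eq_or_lt_of_le hmN with h | h
    · rw [← h]; exact hN.le
    · have h1 : ¬ (N ≤ Nat.find hex - 1 ∧ b ((Nat.find hex - 1) + 1) ≤ c) :=
        Nat.find_min hex (by omega)
      have h2 : (Nat.find hex - 1) + 1 = Nat.find hex := by omega
      rw [h2] at h1
      push_neg at h1
      have hc : c < b (Nat.find hex) := h1 (by omega)
      have h3 := hb (Nat.find hex) hmN
      simp only [Set.mem_Ioo, not_and, not_lt] at h3
      exact h3 hc
  have h4 : d - c ≤ b (Nat.find hex) - b (Nat.find hex + 1) := by linarith
  exact le_trans h4 (le_abs_self _)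

private lemma amono (a : ℕ → ℝ) (hdec : ∀ n ≥ 1, a (n + 1) < a n) :
    ∀ m n, 1 ≤ m → m ≤ n → a n ≤ a m := by
  intro m n h1 hmn
  induction n, hmn using Nat.le_induction with
  | base => exact le_refl _
  | succ n hmn ih => exact le_trans (hdec n (le_trans h1 hmn)).le ih

set_option maxHeartbeats 1000000 in
theorem stmt7 (a : ℕ → ℝ) (hpos : ∀ n ≥ 1, 0 < a n)
    (hdec : ∀ n ≥ 1, a (n + 1) < a n)
    (hlim : Tendsto a atTop (nhds 0))
    (hratio : Tendsto (fun n => a (n + 1) / a n) atTop (nhds 1)) :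
    ∃ E : Set ℝ, IsCompact E ∧ 0 < volume E ∧
      ¬ ∃ f : ℝ → ℝ, (∃ L : ℝ, 1 < L ∧ ∀ x y : ℝ,
          L⁻¹ * |x - y| ≤ |f x - f y| ∧ |f x - f y| ≤ L * |x - y|) ∧
        ∀ n ≥ 1, f (a n) ∈ E := by
  classical
  -- Step 1: ratio control indices
  have hM : ∀ i : ℕ, ∃ M : ℕ, 1 ≤ M ∧ ∀ m ≥ M, (1 - (4:ℝ)⁻¹ ^ i) * a m < a (m + 1) := by
    intro i
    have h1 : (1 - (4:ℝ)⁻¹ ^ i) < 1 := by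
      have : (0:ℝ) < (4:ℝ)⁻¹ ^ i := by positivity
      linarith
    have hev : ∀ᶠ m in atTop, (1 - (4:ℝ)⁻¹ ^ i) < a (m + 1) / a m :=
      hratio.eventually (eventually_gt_nhds h1)
    obtain ⟨M₀, hM₀⟩ := eventually_atTop.mp hev
    refine ⟨max M₀ 1, le_max_right _ _, ?_⟩
    intro m hm
    have hm1 : 1 ≤ m := le_trans (le_max_right _ _) hm
    have hma : 0 < a m := hpos m hm1
    have h2 := hM₀ m (le_trans (le_max_left _ _) hm)
    calc (1 - (4:ℝ)⁻¹ ^ i) * a m < (a (m + 1) / a m) * a m :=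
          mul_lt_mul_of_pos_right h2 hma
      _ = a (m + 1) := div_mul_cancel₀ _ (ne_of_gt hma)
  choose M hM1 hM2 using hM
  -- Step 2: scales
  have hk : ∀ i : ℕ, ∃ K : ℕ, (2:ℝ) ^ i * (1/2 : ℝ) ^ K < a (M i) := by
    intro i
    have haMi : 0 < a (M i) := hpos (M i) (hM1 i)
    have hpos' : (0:ℝ) < a (M i) / 2 ^ i := by positivity
    obtain ⟨K, hK⟩ := exists_pow_lt_of_lt_one hpos' (by norm_num : (1/2:ℝ) < 1)
    refine ⟨K, ?_⟩
    rw [mul_comm]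
    exact (lt_div_iff₀ (by positivity)).mp hK
  choose k hk using hk
  set g : ℕ → ℝ := fun i => (1/2 : ℝ) ^ (k i) with hgdef
  set r : ℕ → ℝ := fun i => (1/2 : ℝ) ^ (i + 4) * g i with hrdef
  set G : Set ℝ := ⋃ i : ℕ, ⋃ j ∈ Finset.range (2 ^ (k i) + 1),
      Metric.ball ((j : ℝ) * g i) (r i) with hGdef
  set E : Set ℝ := Set.Icc (0:ℝ) 1 \ G with hEdef
  have hgpos : ∀ i, (0:ℝ) < g i := fun i => by positivity
  have hrpos : ∀ i, (0:ℝ) < r i := fun i => by positivity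
  have hrg : ∀ i, r i < g i := by
    intro i
    have h1 : ((1:ℝ)/2) ^ (i + 4) < 1 :=
      pow_lt_one₀ (by norm_num) (by norm_num) (by omega)
    calc r i = (1/2:ℝ) ^ (i + 4) * g i := rfl
      _ < 1 * g i := mul_lt_mul_of_pos_right h1 (hgpos i)
      _ = g i := one_mul _
  have hGopen : IsOpen G := isOpen_iUnion fun i => isOpen_biUnion fun j _ => Metric.isOpen_ball
  have h2g : ∀ i, (2:ℝ) ^ (k i) * g i = 1 := by
    intro i
    show (2:ℝ) ^ (k i) * (1/2:ℝ) ^ (k i) = 1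
    rw [← mul_pow]; norm_num
  refine ⟨E, isCompact_Icc.diff hGopen, ?_, ?_⟩
  · -- positive volume
    have hsummable : Summable (fun i : ℕ => (1/2:ℝ) ^ (i + 2)) := by
      have h := (summable_geometric_of_lt_one (by norm_num : (0:ℝ) ≤ 1/2)
        (by norm_num)).mul_right ((1/2:ℝ) ^ 2)
      exact h.congr fun i => (pow_add _ _ _).symm
    have hsum : ∑' i : ℕ, ((1/2:ℝ) ^ (i + 2)) = 1/2 := by
      have h1 : ∀ i : ℕ, (1/2:ℝ) ^ (i + 2) = (1/2:ℝ) ^ i * (1/4) := fun i => by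
        rw [pow_add]; norm_num
      simp_rw [h1]
      rw [tsum_mul_right, tsum_geometric_of_lt_one (by norm_num) (by norm_num)]
      norm_num
    have hGvol : volume G ≤ ENNReal.ofReal (1/2 : ℝ) := by
      have h2 : ∀ i : ℕ, volume (⋃ j ∈ Finset.range (2 ^ (k i) + 1),
          Metric.ball ((j : ℝ) * g i) (r i)) ≤ ENNReal.ofReal ((1/2:ℝ) ^ (i + 2)) := by
        intro i
        have hball : ∀ j : ℕ, volume (Metric.ball ((j : ℝ) * g i) (r i))
            = ENNReal.ofReal (2 * r i) := fun j => Real.volume_ball _ _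
        calc volume (⋃ j ∈ Finset.range (2 ^ (k i) + 1), Metric.ball ((j : ℝ) * g i) (r i))
            ≤ ∑ j ∈ Finset.range (2 ^ (k i) + 1), volume (Metric.ball ((j : ℝ) * g i) (r i)) :=
              measure_biUnion_finset_le _ _
          _ = (2 ^ (k i) + 1 : ℕ) • ENNReal.ofReal (2 * r i) := by
              rw [Finset.sum_congr rfl fun j _ => hball j, Finset.sum_const, Finset.card_range]
          _ = ENNReal.ofReal (((2 ^ (k i) + 1 : ℕ) : ℝ) * (2 * r i)) := by
              rw [nsmul_eq_mul, ← ENNReal.ofReal_natCast (2 ^ (k i) + 1),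
                ← ENNReal.ofReal_mul (by positivity)]
          _ ≤ ENNReal.ofReal ((1/2:ℝ) ^ (i + 2)) := by
              apply ENNReal.ofReal_le_ofReal
              have hcast : ((2 ^ (k i) + 1 : ℕ) : ℝ) = 2 ^ (k i) + 1 := by push_cast; ring
              rw [hcast]
              have hgle : g i ≤ 1 := by
                show (1/2:ℝ) ^ (k i) ≤ 1
                exact pow_le_one₀ (by norm_num) (by norm_num)
              have hexp : (1/2:ℝ) ^ (i + 4) = (1/2:ℝ) ^ (i + 2) * (1/4) := by
                rw [show i + 4 = (i + 2) + 2 by ring, pow_add]; norm_num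
              have hpos2 : (0:ℝ) < (1/2:ℝ) ^ (i + 2) := by positivity
              have key : ((2:ℝ) ^ (k i) + 1) * g i ≤ 2 := by nlinarith [h2g i, hgpos i]
              have e1 : ((2:ℝ) ^ (k i) + 1) * (2 * r i)
                  = (((2:ℝ) ^ (k i) + 1) * g i) * (2 * (1/2:ℝ) ^ (i + 4)) := by
                show ((2:ℝ) ^ (k i) + 1) * (2 * ((1/2:ℝ) ^ (i + 4) * g i)) = _
                ring
              rw [e1]
              calc (((2:ℝ) ^ (k i) + 1) * g i) * (2 * (1/2:ℝ) ^ (i + 4))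
                  ≤ 2 * (2 * (1/2:ℝ) ^ (i + 4)) :=
                    mul_le_mul_of_nonneg_right key (by positivity)
                _ ≤ (1/2:ℝ) ^ (i + 2) := by rw [hexp]; linarith
      calc volume G ≤ ∑' i : ℕ, volume (⋃ j ∈ Finset.range (2 ^ (k i) + 1),
            Metric.ball ((j : ℝ) * g i) (r i)) := measure_iUnion_le _
        _ ≤ ∑' i : ℕ, ENNReal.ofReal ((1/2:ℝ) ^ (i + 2)) := ENNReal.tsum_le_tsum h2
        _ = ENNReal.ofReal (∑' i : ℕ, (1/2:ℝ) ^ (i + 2)) :=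
            (ENNReal.ofReal_tsum_of_nonneg (fun i => by positivity) hsummable).symm
        _ = ENNReal.ofReal (1/2:ℝ) := by rw [hsum]
    rw [pos_iff_ne_zero]
    intro h0
    have hsub : Set.Icc (0:ℝ) 1 ⊆ E ∪ G := fun x hx => by
      by_cases hxG : x ∈ G
      · exact Or.inr hxG
      · exact Or.inl ⟨hx, hxG⟩
    have hone : (1 : ℝ≥0∞) ≤ volume G := by
      calc (1:ℝ≥0∞) = volume (Set.Icc (0:ℝ) 1) := by simp
        _ ≤ volume (E ∪ G) := measure_mono hsub
        _ ≤ volume E + volume G := measure_union_le _ _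
        _ = volume G := by rw [h0, zero_add]
    have hcon : (1:ℝ≥0∞) ≤ ENNReal.ofReal (1/2:ℝ) := le_trans hone hGvol
    rw [ENNReal.one_le_ofReal] at hcon
    norm_num at hcon
  · -- no bi-Lipschitz embedding
    rintro ⟨f, ⟨L, hL, hf⟩, hmem⟩
    have hL0 : (0:ℝ) < L := lt_trans one_pos hL
    have hlip : LipschitzWith (Real.toNNReal L) f := by
      apply LipschitzWith.of_dist_le_mul
      intro x y
      rw [Real.coe_toNNReal L hL0.le, Real.dist_eq, Real.dist_eq]
      exact (hf x y).2
    have htend : Tendsto (fun n => f (a n)) atTop (nhds (f 0)) :=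
      (hlip.continuous.tendsto 0).comp hlim
    have hEsub : E ⊆ Set.Icc (0:ℝ) 1 := Set.diff_subset
    have hp01 : f 0 ∈ Set.Icc (0:ℝ) 1 :=
      isClosed_Icc.mem_of_tendsto htend
        (eventually_atTop.mpr ⟨1, fun n hn => hEsub (hmem n hn)⟩)
    have hlow : ∀ n ≥ 1, L⁻¹ * a n ≤ |f (a n) - f 0| := by
      intro n hn
      have h := (hf (a n) 0).1
      rwa [sub_zero, abs_of_pos (hpos n hn)] at h
    -- choose i
    obtain ⟨i, hi⟩ := pow_unbounded_of_one_lt (64 * L ^ 2) (by norm_num : (1:ℝ) < 2)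
    have hi1 : 1 ≤ i := by
      by_contra h
      push_neg at h
      interval_cases i
      norm_num at hi
      nlinarith
    have h4L : 4 * L < (2:ℝ) ^ i := by nlinarith [mul_pos hL0 hL0]
    set t : ℝ := 4 * L * g i with ht
    have hgi : (0:ℝ) < g i := hgpos i
    have htpos : 0 < t := by positivity
    have htM : t < a (M i) := by
      have h1 := hk i
      have h2 : (2:ℝ) ^ i * (1/2:ℝ) ^ (k i) = (2:ℝ) ^ i * g i := rfl
      calc t = 4 * L * g i := rfl
        _ < 2 ^ i * g i := mul_lt_mul_of_pos_right h4L hgi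
        _ < a (M i) := by rw [← h2]; exact h1
    -- choose N : last index with a N ≥ t
    have hexN : ∃ n, M i ≤ n ∧ a (n + 1) < t := by
      have hev : ∀ᶠ n in atTop, a n < t := hlim.eventually (eventually_lt_nhds htpos)
      obtain ⟨N₂, hN₂⟩ := eventually_atTop.mp hev
      exact ⟨max (M i) N₂, le_max_left _ _,
        hN₂ _ (le_trans (le_max_right _ _) (Nat.le_succ _))⟩
    set N := Nat.find hexN with hNdef
    obtain ⟨hNM, hNt⟩ := Nat.find_spec hexN
    have hN1 : 1 ≤ N := le_trans (hM1 i) hNM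
    have haN : t ≤ a N := by
      rcases eq_or_lt_of_le hNM with h | h
      · rw [hNdef, ← h]; exact htM.le
      · have h1 : ¬ (M i ≤ N - 1 ∧ a ((N - 1) + 1) < t) := Nat.find_min hexN (by omega)
        have h2 : (N - 1) + 1 = N := by omega
        rw [h2] at h1
        push_neg at h1
        exact h1 (by omega)
    have hqi : (4:ℝ)⁻¹ ^ i ≤ 4⁻¹ := by
      calc (4:ℝ)⁻¹ ^ i ≤ 4⁻¹ ^ 1 := pow_le_pow_of_le_one (by norm_num) (by norm_num) hi1
        _ = 4⁻¹ := pow_one _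
    have haN2 : a N ≤ 2 * a (N + 1) := by
      have h1 := hM2 i N hNM
      have h2 : 0 < a N := hpos N hN1
      have h3 : 0 < a (N + 1) := hpos (N + 1) (by omega)
      nlinarith [mul_le_mul_of_nonneg_right hqi h2.le]
    have haN3 : a N < 2 * t := by linarith
    -- step bound for indices ≥ N
    have hq0 : (0:ℝ) < (4:ℝ)⁻¹ ^ i := by positivity
    have hstep : ∀ m, N ≤ m → |f (a m) - f (a (m + 1))| ≤ L * ((4:ℝ)⁻¹ ^ i * a N) := by
      intro m hm
      have hm1 : 1 ≤ m := le_trans hN1 hm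
      have hmono : a m ≤ a N := amono a hdec N m hN1 hm
      have hd : a (m + 1) < a m := hdec m hm1
      have hM2m := hM2 i m (le_trans hNM hm)
      have ham : 0 < a m := hpos m hm1
      have h1 : |f (a m) - f (a (m + 1))| ≤ L * |a m - a (m + 1)| := (hf _ _).2
      have h2 : |a m - a (m + 1)| = a m - a (m + 1) := abs_of_pos (by linarith)
      have h3 : a m - a (m + 1) ≤ (4:ℝ)⁻¹ ^ i * a m := by nlinarith
      have h5 : (4:ℝ)⁻¹ ^ i * a m ≤ (4:ℝ)⁻¹ ^ i * a N :=
        mul_le_mul_of_nonneg_left hmono hq0.le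
      calc |f (a m) - f (a (m + 1))| ≤ L * (a m - a (m + 1)) := by rwa [h2] at h1
        _ ≤ L * ((4:ℝ)⁻¹ ^ i * a m) := mul_le_mul_of_nonneg_left h3 hL0.le
        _ ≤ L * ((4:ℝ)⁻¹ ^ i * a N) := mul_le_mul_of_nonneg_left h5 hL0.le
    -- numeric bound
    have hnum : L * ((4:ℝ)⁻¹ ^ i * a N) < 2 * r i := by
      set u : ℝ := (1/2:ℝ) ^ i with hu
      have hu0 : 0 < u := by positivity
      have h2iu : (2:ℝ) ^ i * u = 1 := by
        rw [hu, ← mul_pow]; norm_num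
      have h64 : 64 * L ^ 2 * u < 1 := by
        have := mul_lt_mul_of_pos_right hi hu0
        rw [h2iu] at this
        linarith
      have hq : (4:ℝ)⁻¹ ^ i = u * u := by
        rw [hu, ← mul_pow]; norm_num
      have hri : r i = u * (1/16) * g i := by
        show (1/2:ℝ) ^ (i + 4) * g i = u * (1/16) * g i
        rw [pow_add, hu]; norm_num
      have haN4 : a N < 8 * L * g i := by
        have h5 : (2:ℝ) * t = 8 * L * g i := by rw [ht]; ring
        linarith
      have hA : L * (u * u * a N) < L * (u * u * (8 * L * g i)) := by
        apply mul_lt_mul_of_pos_left ?_ hL0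
        exact mul_lt_mul_of_pos_left haN4 (by positivity)
      have hB : L * (u * u * (8 * L * g i)) = (64 * L ^ 2 * u) * (u * g i / 8) := by ring
      have hC : (64 * L ^ 2 * u) * (u * g i / 8) < 1 * (u * g i / 8) :=
        mul_lt_mul_of_pos_right h64 (by positivity)
      have hD : (1:ℝ) * (u * g i / 8) = 2 * (u * (1/16) * g i) := by ring
      rw [hq, hri]
      linarith
    -- grid gaps lie in G
    have hGsub : ∀ j : ℤ, 0 ≤ j → (j : ℝ) * g i ≤ 1 →
        Set.Ioo ((j:ℝ) * g i - r i) ((j:ℝ) * g i + r i) ⊆ G := by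
      intro j hj0 hj1 x hx
      have hjR : (j : ℝ) ≤ (2:ℝ) ^ (k i) := by
        by_contra h
        push_neg at h
        have h5 := mul_lt_mul_of_pos_right h hgi
        rw [h2g i] at h5
        linarith
      have hjZ : j ≤ ((2 ^ (k i) : ℕ) : ℤ) := by
        have h6 : ((2:ℝ) ^ (k i)) = (((2 ^ (k i) : ℕ) : ℤ) : ℝ) := by push_cast; ring
        rw [h6] at hjR
        exact_mod_cast hjR
      have hjn : j.toNat < 2 ^ (k i) + 1 := by
        have := Int.toNat_le.mpr hjZ
        omega
      refine Set.mem_iUnion.mpr ⟨i, Set.mem_iUnion₂.mpr ⟨j.toNat, Finset.mem_range.mpr hjn, ?_⟩⟩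
      rw [Real.ball_eq_Ioo]
      have hcast : ((j.toNat : ℕ) : ℝ) = (j : ℝ) := by
        exact_mod_cast congrArg (Int.cast : ℤ → ℝ) (Int.toNat_of_nonneg hj0)
      rw [hcast]
      exact hx
    -- basic position facts
    have hbN0 : (0:ℝ) ≤ f (a N) := (hEsub (hmem N hN1)).1
    have hbN1 : f (a N) ≤ 1 := (hEsub (hmem N hN1)).2
    have haNpos : 0 < a N := hpos N hN1
    have hlowN : L⁻¹ * a N ≤ |f (a N) - f 0| := hlow N hN1
    have hLinv : 0 < L⁻¹ * a N := by positivity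
    have h4g : 4 * g i ≤ L⁻¹ * a N := by
      have h1 : L⁻¹ * t ≤ L⁻¹ * a N :=
        mul_le_mul_of_nonneg_left haN (inv_nonneg.mpr hL0.le)
      have h2 : L⁻¹ * t = 4 * g i := by
        rw [ht]; field_simp
      linarith
    have hne : f (a N) ≠ f 0 := by
      intro h
      rw [h, sub_self, abs_zero] at hlowN
      linarith
    have hEG : ∀ n, 1 ≤ n → f (a n) ∉ G := fun n hn => (hmem n hn).2
    have hp0 : 0 ≤ f 0 := hp01.1
    have hp1 : f 0 ≤ 1 := hp01.2
    have hrgi := hrg i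
    have hri0 := hrpos i
    rcases lt_or_gt_of_ne hne with hcase | hcase
    · -- f (a N) < f 0 : mirrored crossing
      have hbp : L⁻¹ * a N ≤ f 0 - f (a N) := by
        rw [abs_of_neg (by linarith)] at hlowN
        linarith
      set j : ℤ := ⌈f 0 / g i⌉ - 2 with hj
      set c₀ : ℝ := (j : ℝ) * g i with hc₀
      have hceil1 : (⌈f 0 / g i⌉ : ℝ) < f 0 / g i + 1 := Int.ceil_lt_add_one _
      have hceil2 : f 0 / g i ≤ (⌈f 0 / g i⌉ : ℝ) := Int.le_ceil _
      have hm1 := mul_lt_mul_of_pos_right hceil1 hgi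
      have hm2 := mul_le_mul_of_nonneg_right hceil2 hgi.le
      have hfg : (f 0 / g i) * g i = f 0 := div_mul_cancel₀ _ (ne_of_gt hgi)
      have he1 : (f 0 / g i + 1) * g i = f 0 + g i := by rw [add_mul, hfg, one_mul]
      have hc₀e : c₀ = (⌈f 0 / g i⌉ : ℝ) * g i - 2 * g i := by
        rw [hc₀, hj]; push_cast; ring
      have hc₀u : c₀ < f 0 - g i := by rw [hc₀e]; rw [he1] at hm1; linarith
      have hc₀l : f 0 - 2 * g i ≤ c₀ := by rw [hc₀e]; rw [hfg] at hm2; linarith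
      have hj0 : 0 ≤ j := by
        have h1 : 0 < c₀ := by linarith
        by_contra h
        push_neg at h
        have h2 : (j:ℝ) < 0 := by exact_mod_cast h
        have h3 : (j:ℝ) * g i < 0 := mul_neg_of_neg_of_pos h2 hgi
        rw [← hc₀] at h3
        linarith
      have hj1 : (j : ℝ) * g i ≤ 1 := by
        rw [← hc₀]
        linarith
      have hIoo := hGsub j hj0 hj1
      have hnot : ∀ n ≥ N, (fun n => -(f (a n))) n ∉ Set.Ioo (-(c₀ + r i)) (-(c₀ - r i)) := by
        intro n hn hinn
        simp only [Set.mem_Ioo, neg_lt_neg_iff] at hinn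
        refine hEG n (le_trans hN1 hn) (hIoo ?_)
        rw [← hc₀]
        exact ⟨by linarith [hinn.2], by linarith [hinn.1]⟩
      have hdlt : -(c₀ - r i) < (fun n => -(f (a n))) N := by
        simp only
        have : f (a N) ≤ f 0 - L⁻¹ * a N := by linarith
        linarith
      have hplt : -(f 0) < -(c₀ + r i) := by linarith
      obtain ⟨m, hmN, hjump⟩ := cross_lemma (fun n => -(f (a n))) (-(f 0)) (-(c₀ + r i))
        (-(c₀ - r i)) N hnot htend.neg hdlt hplt
      have h2 : |(-(f (a m))) - (-(f (a (m + 1))))| = |f (a m) - f (a (m + 1))| := by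
        rw [show (-(f (a m))) - (-(f (a (m + 1)))) = -(f (a m) - f (a (m + 1))) by ring, abs_neg]
      rw [h2] at hjump
      linarith only [hjump, hstep m hmN, hnum]
    · -- f 0 < f (a N) : direct crossing
      have hbp : L⁻¹ * a N ≤ f (a N) - f 0 := by
        rw [abs_of_pos (by linarith)] at hlowN
        linarith
      set j : ℤ := ⌊f 0 / g i⌋ + 2 with hj
      set c₀ : ℝ := (j : ℝ) * g i with hc₀
      have hfl1 : f 0 / g i < (⌊f 0 / g i⌋ : ℝ) + 1 := Int.lt_floor_add_one _
      have hfl2 : (⌊f 0 / g i⌋ : ℝ) ≤ f 0 / g i := Int.floor_le _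
      have hm1 := mul_lt_mul_of_pos_right hfl1 hgi
      have hm2 := mul_le_mul_of_nonneg_right hfl2 hgi.le
      have hfg : (f 0 / g i) * g i = f 0 := div_mul_cancel₀ _ (ne_of_gt hgi)
      have he1 : ((⌊f 0 / g i⌋ : ℝ) + 1) * g i = (⌊f 0 / g i⌋ : ℝ) * g i + g i := by ring
      have hc₀e : c₀ = (⌊f 0 / g i⌋ : ℝ) * g i + 2 * g i := by
        rw [hc₀, hj]; push_cast; ring
      have hc₀l : f 0 + g i < c₀ := by
        rw [hc₀e]; rw [he1] at hm1; rw [hfg] at hm1; linarith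
      have hc₀u : c₀ ≤ f 0 + 2 * g i := by rw [hc₀e]; rw [hfg] at hm2; linarith
      have hj0 : 0 ≤ j := by
        have h1 : (0:ℤ) ≤ ⌊f 0 / g i⌋ := Int.floor_nonneg.mpr (by positivity)
        omega
      have hdlt : c₀ + r i < f (a N) := by
        have h6 : f 0 + L⁻¹ * a N ≤ f (a N) := by linarith
        linarith
      have hj1 : (j : ℝ) * g i ≤ 1 := by
        rw [← hc₀]
        linarith
      have hIoo := hGsub j hj0 hj1
      have hnot : ∀ n ≥ N, f (a n) ∉ Set.Ioo (c₀ - r i) (c₀ + r i) := by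
        intro n hn hinn
        refine hEG n (le_trans hN1 hn) (hIoo ?_)
        rw [← hc₀]
        exact hinn
      have hplt : f 0 < c₀ - r i := by linarith
      obtain ⟨m, hmN, hjump⟩ := cross_lemma (fun n => f (a n)) (f 0) (c₀ - r i)
        (c₀ + r i) N hnot htend hdlt hplt
      linarith only [hjump, hstep m hmN, hnum]
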